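/- In the edge-form setting, let additionally α₂, β₂ : [0,1] → ℝ be C¹, t, 𝐝 : [0,1] → ℝ² be differentiable, φ₀ ∈ ℝ, g ∈ ℝ² and H a symmetric real 2×2 matrix, and define d₀₀ = φ₀, d₀₁ = ⟨g, t(0)⟩, d₀₂ = t(0)ᵀ H t(0) + ⟨g, t′(0)⟩, d₁₀ = (1/λ)⟨g, 𝐝(0)⟩, d₁₁ = (1/λ)(t(0)ᵀ H 𝐝(0) + ⟨g, 𝐝′(0)⟩). Define f̃(ξ₁,ξ₂) = Σ_{j=0}^{2} d₀ⱼ (c_j⁺(ξ₁)c₀(ξ₂) − β₂(ξ₁)(c_j⁺)′(ξ₁)c₁(ξ₂)) − Σ_{j=0}^{1} d₁ⱼ α₂(ξ₁)c_j⁻(ξ₁)b₁(ξ₂). Then: f̃(0,0) = φ₀, ∂₁f̃(0,0) = ⟨g, t(0)⟩, ∂₁²f̃(0,0) = t(0)ᵀ H t(0) + ⟨g, t′(0)⟩, ∂₂f̃(0,0) = ⟨g, −α₂(0)𝐝(0) − β₂(0)t(0)⟩, and ∂₁∂₂f̃(0,0) = t(0)ᵀ H (−α₂(0)𝐝(0)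 − β₂(0)t(0)) + ⟨g, −(α₂𝐝)′(0) − (β₂t)′(0)⟩. -/

import Mathlib

/-- Partial derivative with respect to the first argument. -/
noncomputable def pd1 {E : Type*} [NormedAddCommGroup E] [NormedSpace ℝ E]
    (f : ℝ × ℝ → E) (x : ℝ × ℝ) : E := deriv (fun s => f (s, x.2)) x.1

/-- Partial derivative with respect to the second argument. -/
noncomputable def pd2 {E : Type*} [NormedAddCommGroup E] [NormedSpace ℝ E]
    (f : ℝ × ℝ → E) (x : ℝ × ℝ) : E := deriv (fun s => f (x.1, s)) x.2

/-- The Euclidean inner product on `ℝ²`. -/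
def dot2 (a b : ℝ × ℝ) : ℝ := a.1 * b.1 + a.2 * b.2

/-- The bilinear form `aᵀ H b` on `ℝ²` given by a 2×2 matrix `H`. -/
def qf (H : Matrix (Fin 2) (Fin 2) ℝ) (a b : ℝ × ℝ) : ℝ :=
  a.1 * (H 0 0 * b.1 + H 0 1 * b.2) + a.2 * (H 1 0 * b.1 + H 1 1 * b.2)

/-- The vertex-edge function `f̃` pulled back to the second adjacent patch, with
coefficients `d = (d₀₀, d₀₁, d₀₂, d₁₀, d₁₁)` and gluing data `α₂, β₂`. -/
noncomputable def fEdgeSwap (cp₀ cp₁ cp₂ cm₀ cm₁ c₀ c₁ b₁ α₂ β₂ : ℝ → ℝ)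
    (d : ℝ × ℝ × ℝ × ℝ × ℝ) : ℝ × ℝ → ℝ := fun ξ =>
  d.1 * (cp₀ ξ.1 * c₀ ξ.2 - β₂ ξ.1 * deriv cp₀ ξ.1 * c₁ ξ.2)
  + d.2.1 * (cp₁ ξ.1 * c₀ ξ.2 - β₂ ξ.1 * deriv cp₁ ξ.1 * c₁ ξ.2)
  + d.2.2.1 * (cp₂ ξ.1 * c₀ ξ.2 - β₂ ξ.1 * deriv cp₂ ξ.1 * c₁ ξ.2)
  - d.2.2.2.1 * (α₂ ξ.1 * cm₀ ξ.1 * b₁ ξ.2)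
  - d.2.2.2.2 * (α₂ ξ.1 * cm₁ ξ.1 * b₁ ξ.2)

lemma deriv_contDiff_two {f : ℝ → ℝ} (h : ContDiff ℝ 2 f) : Differentiable ℝ (deriv f) := by
  have h2 : ContDiff ℝ (1+1) f := by norm_num; exact h
  exact (contDiff_succ_iff_deriv.mp h2).2.2.differentiable one_ne_zero

lemma key (cp₀ cp₁ cp₂ cm₀ cm₁ c₀ c₁ b₁ α₂ β₂ : ℝ → ℝ)
    (hcp₀ : ContDiff ℝ 2 cp₀) (hcp₁ : ContDiff ℝ 2 cp₁) (hcp₂ : ContDiff ℝ 2 cp₂)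
    (hcm₀ : ContDiff ℝ 1 cm₀) (hcm₁ : ContDiff ℝ 1 cm₁)
    (hc₀ : ContDiff ℝ 1 c₀) (hc₁ : ContDiff ℝ 1 c₁) (hb₁ : ContDiff ℝ 1 b₁)
    (hc₀0 : c₀ 0 = 1) (hc₀1 : deriv c₀ 0 = 0)
    (hc₁0 : c₁ 0 = 0) (hc₁1 : deriv c₁ 0 = 1)
    (lam : ℝ) (hb₁0 : b₁ 0 = 0) (hb₁1 : deriv b₁ 0 = lam)
    (hα₂ : ContDiff ℝ 1 α₂) (hβ₂ : ContDiff ℝ 1 β₂)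
    (d00 d01 d02 d10 d11 : ℝ) :
    (fEdgeSwap cp₀ cp₁ cp₂ cm₀ cm₁ c₀ c₁ b₁ α₂ β₂ (d00,d01,d02,d10,d11) (0,0)
        = d00 * cp₀ 0 + d01 * cp₁ 0 + d02 * cp₂ 0) ∧
    (pd1 (fEdgeSwap cp₀ cp₁ cp₂ cm₀ cm₁ c₀ c₁ b₁ α₂ β₂ (d00,d01,d02,d10,d11)) (0,0)
        = d00 * deriv cp₀ 0 + d01 * deriv cp₁ 0 + d02 * deriv cp₂ 0) ∧
    (pd1 (pd1 (fEdgeSwap cp₀ cp₁ cp₂ cm₀ cm₁ c₀ c₁ b₁ α₂ β₂ (d00,d01,d02,d10,d11))) (0,0)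
        = d00 * deriv (deriv cp₀) 0 + d01 * deriv (deriv cp₁) 0 + d02 * deriv (deriv cp₂) 0) ∧
    (pd2 (fEdgeSwap cp₀ cp₁ cp₂ cm₀ cm₁ c₀ c₁ b₁ α₂ β₂ (d00,d01,d02,d10,d11)) (0,0)
        = -(β₂ 0 * (d00 * deriv cp₀ 0 + d01 * deriv cp₁ 0 + d02 * deriv cp₂ 0))
          - α₂ 0 * (d10 * cm₀ 0 + d11 * cm₁ 0) * lam) ∧
    (pd1 (pd2 (fEdgeSwap cp₀ cp₁ cp₂ cm₀ cm₁ c₀ c₁ b₁ α₂ β₂ (d00,d01,d02,d10,d11))) (0,0)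
        = -(deriv β₂ 0 * (d00 * deriv cp₀ 0 + d01 * deriv cp₁ 0 + d02 * deriv cp₂ 0)
              + β₂ 0 * (d00 * deriv (deriv cp₀) 0 + d01 * deriv (deriv cp₁) 0
                + d02 * deriv (deriv cp₂) 0))
          - (deriv α₂ 0 * (d10 * cm₀ 0 + d11 * cm₁ 0)
              + α₂ 0 * (d10 * deriv cm₀ 0 + d11 * deriv cm₁ 0)) * lam) := by
  set f := fEdgeSwap cp₀ cp₁ cp₂ cm₀ cm₁ c₀ c₁ b₁ α₂ β₂ (d00,d01,d02,d10,d11) with hf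
  have dcp₀ : Differentiable ℝ cp₀ := hcp₀.differentiable two_ne_zero
  have dcp₁ : Differentiable ℝ cp₁ := hcp₁.differentiable two_ne_zero
  have dcp₂ : Differentiable ℝ cp₂ := hcp₂.differentiable two_ne_zero
  have ddcp₀ : Differentiable ℝ (deriv cp₀) := deriv_contDiff_two hcp₀
  have ddcp₁ : Differentiable ℝ (deriv cp₁) := deriv_contDiff_two hcp₁
  have ddcp₂ : Differentiable ℝ (deriv cp₂) := deriv_contDiff_two hcp₂
  have dcm₀ : Differentiable ℝ cm₀ := hcm₀.differentiable one_ne_zero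
  have dcm₁ : Differentiable ℝ cm₁ := hcm₁.differentiable one_ne_zero
  have dc₀ : Differentiable ℝ c₀ := hc₀.differentiable one_ne_zero
  have dc₁ : Differentiable ℝ c₁ := hc₁.differentiable one_ne_zero
  have db₁ : Differentiable ℝ b₁ := hb₁.differentiable one_ne_zero
  have dα : Differentiable ℝ α₂ := hα₂.differentiable one_ne_zero
  have dβ : Differentiable ℝ β₂ := hβ₂.differentiable one_ne_zero
  -- the section at ξ₂ = 0
  have hcol : (fun s => f (s, 0)) = fun s => d00 * cp₀ s + d01 * cp₁ s + d02 * cp₂ s := by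
    funext s
    simp only [hf, fEdgeSwap, hc₀0, hc₁0, hb₁0]
    ring
  -- the section at ξ₁ = s
  have hrow : ∀ s : ℝ, (fun u => f (s, u)) = fun u =>
      (d00 * cp₀ s + d01 * cp₁ s + d02 * cp₂ s) * c₀ u
      - (β₂ s * (d00 * deriv cp₀ s + d01 * deriv cp₁ s + d02 * deriv cp₂ s)) * c₁ u
      - (α₂ s * (d10 * cm₀ s + d11 * cm₁ s)) * b₁ u := by
    intro s
    funext u
    simp only [hf, fEdgeSwap]
    ring
  have hAder : ∀ s : ℝ, HasDerivAt (fun s => d00 * cp₀ s + d01 * cp₁ s + d02 * cp₂ s)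
      (d00 * deriv cp₀ s + d01 * deriv cp₁ s + d02 * deriv cp₂ s) s := fun s =>
    (((dcp₀ s).hasDerivAt.const_mul d00).add ((dcp₁ s).hasDerivAt.const_mul d01)).add
      ((dcp₂ s).hasDerivAt.const_mul d02)
  have hDder : ∀ s : ℝ, HasDerivAt
      (fun s => d00 * deriv cp₀ s + d01 * deriv cp₁ s + d02 * deriv cp₂ s)
      (d00 * deriv (deriv cp₀) s + d01 * deriv (deriv cp₁) s + d02 * deriv (deriv cp₂) s)
      s := fun s =>
    (((ddcp₀ s).hasDerivAt.const_mul d00).add ((ddcp₁ s).hasDerivAt.const_mul d01)).add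
      ((ddcp₂ s).hasDerivAt.const_mul d02)
  have hEder : ∀ s : ℝ, HasDerivAt (fun s => d10 * cm₀ s + d11 * cm₁ s)
      (d10 * deriv cm₀ s + d11 * deriv cm₁ s) s := fun s =>
    ((dcm₀ s).hasDerivAt.const_mul d10).add ((dcm₁ s).hasDerivAt.const_mul d11)
  refine ⟨?_, ?_, ?_, ?_, ?_⟩
  · simp only [hf, fEdgeSwap, hc₀0, hc₁0, hb₁0]
    ring
  · have : pd1 f (0, 0) = deriv (fun s => f (s, 0)) 0 := rfl
    rw [this, hcol, (hAder 0).deriv]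
  · have hpd1 : (fun s => pd1 f (s, 0))
        = fun s => d00 * deriv cp₀ s + d01 * deriv cp₁ s + d02 * deriv cp₂ s := by
      funext s
      have : pd1 f (s, 0) = deriv (fun u => f (u, 0)) s := rfl
      rw [this, hcol, (hAder s).deriv]
    have : pd1 (pd1 f) (0, 0) = deriv (fun s => pd1 f (s, 0)) 0 := rfl
    rw [this, hpd1, (hDder 0).deriv]
  · have : pd2 f (0, 0) = deriv (fun u => f (0, u)) 0 := rfl
    rw [this, hrow 0]
    have h := (((dc₀ 0).hasDerivAt.const_mul
        (d00 * cp₀ 0 + d01 * cp₁ 0 + d02 * cp₂ 0)).sub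
      ((dc₁ 0).hasDerivAt.const_mul
        (β₂ 0 * (d00 * deriv cp₀ 0 + d01 * deriv cp₁ 0 + d02 * deriv cp₂ 0)))).sub
      ((db₁ 0).hasDerivAt.const_mul (α₂ 0 * (d10 * cm₀ 0 + d11 * cm₁ 0)))
    erw [h.deriv, hc₀1, hc₁1, hb₁1]
    ring
  · have hpd2 : (fun s => pd2 f (s, 0)) = fun s =>
        -(β₂ s * (d00 * deriv cp₀ s + d01 * deriv cp₁ s + d02 * deriv cp₂ s))
        - (α₂ s * (d10 * cm₀ s + d11 * cm₁ s)) * lam := by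
      funext s
      have : pd2 f (s, 0) = deriv (fun u => f (s, u)) 0 := rfl
      rw [this, hrow s]
      have h := (((dc₀ 0).hasDerivAt.const_mul
          (d00 * cp₀ s + d01 * cp₁ s + d02 * cp₂ s)).sub
        ((dc₁ 0).hasDerivAt.const_mul
          (β₂ s * (d00 * deriv cp₀ s + d01 * deriv cp₁ s + d02 * deriv cp₂ s)))).sub
        ((db₁ 0).hasDerivAt.const_mul (α₂ s * (d10 * cm₀ s + d11 * cm₁ s)))
      erw [h.deriv, hc₀1, hc₁1, hb₁1]
      ring
    have hQ := (dβ 0).hasDerivAt.mul (hDder 0)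
    have hR := ((dα 0).hasDerivAt.mul (hEder 0)).mul_const lam
    have : pd1 (pd2 f) (0, 0) = deriv (fun s => pd2 f (s, 0)) 0 := rfl
    rw [this, hpd2]
    erw [(hQ.neg.sub hR).deriv]

/-- In the edge-form setting, the vertex-edge function on the second adjacent patch,
built from the coefficients `d` obtained by interpolation on the first patch,
automatically attains the chain-rule Hermite data of `φ ∘ F` at `(0,0)` up to the
orders `(m₁ ≤ 2, m₂ ≤ 1, m₁+m₂ ≤ 2)`. -/
theorem stmt14 (cp₀ cp₁ cp₂ cm₀ cm₁ c₀ c₁ b₁ α β : ℝ → ℝ)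
    (hcp₀ : ContDiff ℝ 2 cp₀) (hcp₁ : ContDiff ℝ 2 cp₁) (hcp₂ : ContDiff ℝ 2 cp₂)
    (hcp₀0 : cp₀ 0 = 1) (hcp₀1 : deriv cp₀ 0 = 0) (hcp₀2 : deriv (deriv cp₀) 0 = 0)
    (hcp₁0 : cp₁ 0 = 0) (hcp₁1 : deriv cp₁ 0 = 1) (hcp₁2 : deriv (deriv cp₁) 0 = 0)
    (hcp₂0 : cp₂ 0 = 0) (hcp₂1 : deriv cp₂ 0 = 0) (hcp₂2 : deriv (deriv cp₂) 0 = 1)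
    (hcm₀ : ContDiff ℝ 1 cm₀) (hcm₁ : ContDiff ℝ 1 cm₁)
    (hcm₀0 : cm₀ 0 = 1) (hcm₀1 : deriv cm₀ 0 = 0)
    (hcm₁0 : cm₁ 0 = 0) (hcm₁1 : deriv cm₁ 0 = 1)
    (hc₀ : ContDiff ℝ 1 c₀) (hc₁ : ContDiff ℝ 1 c₁) (hb₁ : ContDiff ℝ 1 b₁)
    (hc₀0 : c₀ 0 = 1) (hc₀1 : deriv c₀ 0 = 0)
    (hc₁0 : c₁ 0 = 0) (hc₁1 : deriv c₁ 0 = 1)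
    (lam : ℝ) (hlam : lam ≠ 0) (hb₁0 : b₁ 0 = 0) (hb₁1 : deriv b₁ 0 = lam)
    (hα : ContDiff ℝ 1 α) (hβ : ContDiff ℝ 1 β) (hα0 : α 0 ≠ 0)
    (α₂ β₂ : ℝ → ℝ) (hα₂ : ContDiff ℝ 1 α₂) (hβ₂ : ContDiff ℝ 1 β₂)
    (tv dv : ℝ → ℝ × ℝ) (htv : Differentiable ℝ tv) (hdv : Differentiable ℝ dv)
    (φ₀ : ℝ) (g : ℝ × ℝ) (H : Matrix (Fin 2) (Fin 2) ℝ) (hH : H.IsSymm)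
    (d : ℝ × ℝ × ℝ × ℝ × ℝ)
    (hd : d = (φ₀, dot2 g (tv 0), qf H (tv 0) (tv 0) + dot2 g (deriv tv 0),
      (1 / lam) * dot2 g (dv 0),
      (1 / lam) * (qf H (tv 0) (dv 0) + dot2 g (deriv dv 0)))) :
    fEdgeSwap cp₀ cp₁ cp₂ cm₀ cm₁ c₀ c₁ b₁ α₂ β₂ d (0, 0) = φ₀ ∧
    pd1 (fEdgeSwap cp₀ cp₁ cp₂ cm₀ cm₁ c₀ c₁ b₁ α₂ β₂ d) (0, 0) = dot2 g (tv 0) ∧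
    pd1 (pd1 (fEdgeSwap cp₀ cp₁ cp₂ cm₀ cm₁ c₀ c₁ b₁ α₂ β₂ d)) (0, 0)
      = qf H (tv 0) (tv 0) + dot2 g (deriv tv 0) ∧
    pd2 (fEdgeSwap cp₀ cp₁ cp₂ cm₀ cm₁ c₀ c₁ b₁ α₂ β₂ d) (0, 0)
      = dot2 g (-(α₂ 0) • dv 0 - β₂ 0 • tv 0) ∧
    pd1 (pd2 (fEdgeSwap cp₀ cp₁ cp₂ cm₀ cm₁ c₀ c₁ b₁ α₂ β₂ d)) (0, 0)
      = qf H (tv 0) (-(α₂ 0) • dv 0 - β₂ 0 • tv 0)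
        + dot2 g (-(deriv (fun ξ => α₂ ξ • dv ξ) 0)
          - deriv (fun ξ => β₂ ξ • tv ξ) 0) := by
  subst hd
  obtain ⟨h1, h2, h3, h4, h5⟩ := key cp₀ cp₁ cp₂ cm₀ cm₁ c₀ c₁ b₁ α₂ β₂
    hcp₀ hcp₁ hcp₂ hcm₀ hcm₁ hc₀ hc₁ hb₁ hc₀0 hc₀1 hc₁0 hc₁1 lam hb₁0 hb₁1 hα₂ hβ₂
    φ₀ (dot2 g (tv 0)) (qf H (tv 0) (tv 0) + dot2 g (deriv tv 0))
    ((1 / lam) * dot2 g (dv 0)) ((1 / lam) * (qf H (tv 0) (dv 0) + dot2 g (deriv dv 0)))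
  simp only [hcp₀0, hcp₀1, hcp₀2, hcp₁0, hcp₁1, hcp₁2, hcp₂0, hcp₂1, hcp₂2,
    hcm₀0, hcm₀1, hcm₁0, hcm₁1, mul_zero, mul_one, add_zero, zero_add] at h1 h2 h3 h4 h5
  have hAd : deriv (fun ξ => α₂ ξ • dv ξ) 0 = α₂ 0 • deriv dv 0 + deriv α₂ 0 • dv 0 :=
    ((hα₂.differentiable one_ne_zero 0).hasDerivAt.smul (hdv 0).hasDerivAt).deriv
  have hBd : deriv (fun ξ => β₂ ξ • tv ξ) 0 = β₂ 0 • deriv tv 0 + deriv β₂ 0 • tv 0 :=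
    ((hβ₂.differentiable one_ne_zero 0).hasDerivAt.smul (htv 0).hasDerivAt).deriv
  refine ⟨?_, ?_, ?_, ?_, ?_⟩
  · exact h1
  · exact h2
  · exact h3
  · rw [h4]
    simp only [dot2, Prod.fst_sub, Prod.snd_sub, Prod.smul_fst, Prod.smul_snd, smul_eq_mul]
    field_simp
    ring
  · rw [h5, hAd, hBd]
    simp only [dot2, qf, Prod.fst_sub, Prod.snd_sub, Prod.fst_add, Prod.snd_add,
      Prod.fst_neg, Prod.snd_neg, Prod.smul_fst, Prod.smul_snd, smul_eq_mul]
    field_simp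
    ring
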